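/- Let ω = e^{2πi/11}, let ψ : ℂ⁶ → ℂ⁶ be the diagonal linear map with eigenvalues (1, ω, ω³, ω⁴, ω⁵, ω⁹) on the standard basis e₀, ..., e₅, and let h = x₀³ + x₁²x₅ + x₂²x₄ + x₃²x₂ + x₄²x₁ + x₅²x₃. Then for a nonzero vector v ∈ ℂ⁶ with h(v) = 0, the following are equivalent: (a) v is an eigenvector of ψ (i.e., ψ(v) = λv for some λ ∈ ℂ); (b) v is a nonzero scalar multiple of one of e₁, e₂, e₃, e₄, e₅. In other words, the fixed points of the induced automorphism of the Klein cubic fourfold X_Kl = V(h) ⊂ ℙ⁵ are exactly the five coordinate points [e₁], [e₂], [e₃], [e₄], [e₅]. -/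

import Mathlib

open MvPolynomial

/-!
The fixed points on the Klein cubic fourfold `X_Kl = V(h) ⊂ ℙ⁵` of the order
11 automorphism induced by the diagonal map `ψ` with eigenvalues
`(1, ω, ω³, ω⁴, ω⁵, ω⁹)` are exactly the coordinate points
`[e₁], [e₂], [e₃], [e₄], [e₅]`.
-/

/-- `ω = e^{2πi/11}`, a primitive 11-th root of unity. -/
noncomputable def ω : ℂ := Complex.exp (2 * Real.pi * Complex.I / 11)

/-- The diagonal linear map `ψ : ℂ⁶ → ℂ⁶` with eigenvalues
`(1, ω, ω³, ω⁴, ω⁵, ω⁹)`. -/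
noncomputable def ψ (v : Fin 6 → ℂ) : Fin 6 → ℂ :=
  fun i => ![1, ω, ω ^ 3, ω ^ 4, ω ^ 5, ω ^ 9] i * v i

/-- The defining polynomial `h` of the Klein cubic fourfold `X_Kl ⊂ ℙ⁵`. -/
noncomputable def klein : MvPolynomial (Fin 6) ℂ :=
  X 0 ^ 3 + X 1 ^ 2 * X 5 + X 2 ^ 2 * X 4 + X 3 ^ 2 * X 2 +
    X 4 ^ 2 * X 1 + X 5 ^ 2 * X 3

lemma omega_prim : IsPrimitiveRoot ω 11 := by
  have := Complex.isPrimitiveRoot_exp 11 (by norm_num)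
  simpa [ω] using this

/-- The diagonal entries of ψ are pairwise distinct. -/
lemma diag_inj : Function.Injective (![1, ω, ω ^ 3, ω ^ 4, ω ^ 5, ω ^ 9] : Fin 6 → ℂ) := by
  have h := omega_prim
  have key : ∀ a b : ℕ, a < 11 → b < 11 → ω ^ a = ω ^ b → a = b := fun a b ha hb =>
    h.pow_inj ha hb
  have he : ∀ i : Fin 6, (![1, ω, ω ^ 3, ω ^ 4, ω ^ 5, ω ^ 9] : Fin 6 → ℂ) i
      = ω ^ (![0, 1, 3, 4, 5, 9] : Fin 6 → ℕ) i := by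
    intro i; fin_cases i <;> norm_num [Matrix.cons_val_succ]
  intro i j hij
  rw [he i, he j] at hij
  have hlt : ∀ i : Fin 6, (![0, 1, 3, 4, 5, 9] : Fin 6 → ℕ) i < 11 := by decide
  have := key _ _ (hlt i) (hlt j) hij
  have hinj : Function.Injective (![0, 1, 3, 4, 5, 9] : Fin 6 → ℕ) := by decide
  exact hinj this

theorem klein_fixed_points (v : Fin 6 → ℂ) (hv : v ≠ 0)
    (hvX : eval v klein = 0) :
    (∃ l : ℂ, ψ v = l • v) ↔
      ∃ i : Fin 6, i ≠ 0 ∧ ∃ c : ℂ, c ≠ 0 ∧ v = c • (Pi.single i 1 : Fin 6 → ℂ) := by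
  set d : Fin 6 → ℂ := ![1, ω, ω ^ 3, ω ^ 4, ω ^ 5, ω ^ 9] with hd
  constructor
  · rintro ⟨l, hl⟩
    have hl' : ∀ i, d i * v i = l * v i := fun i => congrFun hl i
    obtain ⟨j, hj⟩ := Function.ne_iff.mp hv
    have hj' : v j ≠ 0 := hj
    have hlj : l = d j := by
      have := hl' j
      exact (mul_right_cancel₀ hj' this).symm
    have hzero : ∀ i, i ≠ j → v i = 0 := by
      intro i hij
      by_contra hvi
      have := hl' i
      rw [hlj] at this
      have : d i = d j := by
        have := mul_right_cancel₀ hvi this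
        exact this
      exact hij (diag_inj this)
    have hvs : v = v j • (Pi.single j 1 : Fin 6 → ℂ) := by
      funext i
      by_cases h : i = j
      · subst h; simp
      · simp [Pi.single_apply, h, hzero i h]
    have hj0 : j ≠ 0 := by
      intro h
      subst h
      have h1 : v 1 = 0 := hzero 1 (by decide)
      have h2 : v 2 = 0 := hzero 2 (by decide)
      have h3 : v 3 = 0 := hzero 3 (by decide)
      have h4 : v 4 = 0 := hzero 4 (by decide)
      have h5 : v 5 = 0 := hzero 5 (by decide)
      simp [klein, h1, h2, h3, h4, h5] at hvX
      exact hj' hvX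
    exact ⟨j, hj0, v j, hj', hvs⟩
  · rintro ⟨i, hi0, c, hc, rfl⟩
    refine ⟨d i, ?_⟩
    funext k
    by_cases h : k = i
    · subst h; simp [ψ, hd]
    · simp [ψ, hd, Pi.single_apply, h]
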